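/- Let (T_t)_{t≥0} be a strongly continuous one-parameter semigroup on a Banach space E with generator A, and B ∈ B(E) a bounded operator. Then the semigroup (U_t) generated by A + B satisfies the Trotter product formula U_t x = lim_{n→∞} (T_{t/n} e^{tB/n})^n x for every x ∈ E. -/

import Mathlib

open Filter

set_option maxHeartbeats 2000000
set_option synthInstance.maxHeartbeats 1000000
set_option linter.unusedSectionVars false

section TrotterAux

variable {E : Type*} [NormedAddCommGroup E] [NormedSpace ℝ E] [CompleteSpace E]

lemma trotter_bdd (T : ℝ → E →L[ℝ] E)
    (hTcont : ∀ x : E, ContinuousOn (fun t => T t x) (Set.Ici 0)) (c : ℝ) :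
    ∃ M : ℝ, 1 ≤ M ∧ ∀ s : ℝ, 0 ≤ s → s ≤ c → ‖T s‖ ≤ M := by
  obtain ⟨M0, hM0⟩ := banach_steinhaus (ι := Set.Icc (0:ℝ) c)
    (g := fun s : Set.Icc (0:ℝ) c => T s) (fun x => by
      obtain ⟨C, hC⟩ := (isCompact_Icc (a := (0:ℝ)) (b := c)).exists_bound_of_continuousOn
        ((hTcont x).mono Set.Icc_subset_Ici_self)
      exact ⟨C, fun i => hC i i.2⟩)
  exact ⟨max M0 1, le_max_right _ _, fun s h0 hc =>
    le_trans (hM0 ⟨s, h0, hc⟩) (le_max_left _ _)⟩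

lemma trotter_growth (T : ℝ → E →L[ℝ] E)
    (hTsem : ∀ s t : ℝ, 0 ≤ s → 0 ≤ t → T (s + t) = T s ∘L T t)
    {M : ℝ} (hM1 : 1 ≤ M) (hM : ∀ s : ℝ, 0 ≤ s → s ≤ 1 → ‖T s‖ ≤ M) :
    ∀ s : ℝ, 0 ≤ s → ‖T s‖ ≤ M * Real.exp (Real.log M * s) := by
  have hMpos : (0:ℝ) < M := lt_of_lt_of_le one_pos hM1
  have key : ∀ n : ℕ, ∀ s : ℝ, 0 ≤ s → s ≤ n + 1 → ‖T s‖ ≤ M ^ (n + 1) := by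
    intro n
    induction n with
    | zero =>
      intro s h0 h1
      simpa using hM s h0 (by simpa using h1)
    | succ n ih =>
      intro s h0 hs
      by_cases h : s ≤ n + 1
      · exact le_trans (ih s h0 h) (pow_le_pow_right₀ hM1 (by omega))
      · push_neg at h
        have hn0 : (0:ℝ) ≤ (n:ℝ) := n.cast_nonneg
        have h1 : (0:ℝ) ≤ s - 1 := by linarith
        have hTs : T s = T 1 ∘L T (s - 1) := by
          have := hTsem 1 (s - 1) one_pos.le h1
          simpa using this
        rw [hTs]
        calc ‖T 1 ∘L T (s-1)‖ ≤ ‖T 1‖ * ‖T (s-1)‖ := ContinuousLinearMap.opNorm_comp_le _ _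
          _ ≤ M * M ^ (n+1) := by
              apply mul_le_mul (hM 1 zero_le_one le_rfl) (ih _ h1 (by push_cast at hs ⊢; linarith))
                (norm_nonneg _) (by linarith)
          _ = M ^ (n+1+1) := by ring
  intro s hs
  refine (key ⌊s⌋₊ s hs (by exact_mod_cast (Nat.lt_floor_add_one s).le)).trans ?_
  have h2 : (M:ℝ) ^ (⌊s⌋₊ + 1) = M * M ^ (⌊s⌋₊) := by ring
  rw [h2]
  have h3 : (M:ℝ) ^ (⌊s⌋₊) = Real.exp (Real.log M * ⌊s⌋₊) := by
    rw [mul_comm, Real.exp_nat_mul, Real.exp_log hMpos]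
  rw [h3]
  have hlog : 0 ≤ Real.log M := Real.log_nonneg hM1
  exact mul_le_mul_of_nonneg_left (Real.exp_le_exp.2
    (mul_le_mul_of_nonneg_left (Nat.floor_le hs) hlog)) hMpos.le

lemma trotter_norm_exp_le (M : E →L[ℝ] E) :
    ‖NormedSpace.exp M‖ ≤ Real.exp ‖M‖ := by
  rw [NormedSpace.exp_eq_tsum ℝ]
  have hsum := NormedSpace.norm_expSeries_summable' (𝕂 := ℝ) M
  refine (norm_tsum_le_tsum_norm hsum).trans ?_
  have hsum2 := NormedSpace.expSeries_summable' (𝕂 := ℝ) ‖M‖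
  have hterm : ∀ k : ℕ, ‖((k.factorial:ℝ)⁻¹ • M ^ k)‖ ≤ (k.factorial:ℝ)⁻¹ * ‖M‖ ^ k := by
    intro k
    have h0 : (0:ℝ) ≤ (k.factorial:ℝ)⁻¹ := by positivity
    have h1 : ‖M ^ k‖ ≤ ‖M‖ ^ k := by
      cases k with
      | zero => simp only [pow_zero]; exact ContinuousLinearMap.norm_id_le
      | succ k => exact norm_pow_le' M k.succ_pos
    calc ‖((k.factorial:ℝ)⁻¹ • M ^ k)‖ = (k.factorial:ℝ)⁻¹ * ‖M ^ k‖ := by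
          rw [norm_smul ((k.factorial:ℝ)⁻¹) (M ^ k), Real.norm_eq_abs, abs_of_nonneg h0]
      _ ≤ (k.factorial:ℝ)⁻¹ * ‖M‖ ^ k := by gcongr
  refine (hsum.tsum_le_tsum hterm ?_).trans ?_
  · simpa [smul_eq_mul] using hsum2
  · rw [Real.exp_eq_exp_ℝ, NormedSpace.exp_eq_tsum ℝ]
    simp [smul_eq_mul]


lemma trotter_exp_remainder (B : E →L[ℝ] E) {h : ℝ} (h0 : 0 ≤ h) (h1 : h ≤ 1) :
    ‖NormedSpace.exp (h • B) - 1 - h • B‖ ≤ h ^ 2 * (‖B‖ ^ 2 * Real.exp ‖B‖) := by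
  have hDer : ∀ u : ℝ, HasDerivAt (fun u : ℝ => NormedSpace.exp (u • B))
      (NormedSpace.exp (u • B) * B) u := fun u => hasDerivAt_exp_smul_const B u
  have hexpnorm : ∀ u : ℝ, 0 ≤ u → u ≤ 1 → ‖NormedSpace.exp (u • B)‖ ≤ Real.exp ‖B‖ := by
    intro u hu hu1
    refine (trotter_norm_exp_le _).trans (Real.exp_le_exp.2 ?_)
    rw [norm_smul u B, Real.norm_eq_abs, abs_of_nonneg hu]
    nlinarith [norm_nonneg B]
  -- step A : ‖exp (u•B) - 1‖ ≤ u * (‖B‖ * exp ‖B‖) for u ∈ [0,1]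
  have stepA : ∀ u : ℝ, 0 ≤ u → u ≤ 1 → ‖NormedSpace.exp (u • B) - 1‖
      ≤ u * (‖B‖ * Real.exp ‖B‖) := by
    intro u hu hu1
    have hmvt := Convex.norm_image_sub_le_of_norm_hasDerivWithin_le
      (f := fun u : ℝ => NormedSpace.exp (u • B))
      (f' := fun u : ℝ => NormedSpace.exp (u • B) * B)
      (C := ‖B‖ * Real.exp ‖B‖) (s := Set.Icc (0:ℝ) 1)
      (fun r hr => (hDer r).hasDerivWithinAt)
      (fun r hr => by
        calc ‖NormedSpace.exp (r • B) * B‖ ≤ ‖NormedSpace.exp (r • B)‖ * ‖B‖ :=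
              norm_mul_le _ _
          _ ≤ Real.exp ‖B‖ * ‖B‖ := by gcongr; exact hexpnorm r hr.1 hr.2
          _ = ‖B‖ * Real.exp ‖B‖ := by ring)
      (convex_Icc _ _) (Set.left_mem_Icc.2 zero_le_one) (Set.mem_Icc.2 ⟨hu, hu1⟩)
    have hmvt' : ‖NormedSpace.exp (u • B) - 1‖ ≤ ‖B‖ * Real.exp ‖B‖ * u := by
      simpa [zero_smul, NormedSpace.exp_zero, sub_zero, Real.norm_eq_abs,
        abs_of_nonneg hu] using hmvt
    exact hmvt'.trans_eq (by ring)
  -- step B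
  have hmvt2 := Convex.norm_image_sub_le_of_norm_hasDerivWithin_le
    (f := fun u : ℝ => NormedSpace.exp (u • B) - 1 - u • B)
    (f' := fun u : ℝ => (NormedSpace.exp (u • B) - 1) * B)
    (C := h * (‖B‖ * Real.exp ‖B‖) * ‖B‖) (s := Set.Icc (0:ℝ) h)
    (fun r hr => by
      have := (((hDer r).sub_const 1).sub ((hasDerivAt_id r).smul_const B)).hasDerivWithinAt
        (s := Set.Icc (0:ℝ) h)
      have e : NormedSpace.exp (r • B) * B - (1:ℝ) • B = (NormedSpace.exp (r • B) - 1) * B := by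
        rw [one_smul, sub_mul, one_mul]
      rwa [e] at this)
    (fun r hr => by
      calc ‖(NormedSpace.exp (r • B) - 1) * B‖ ≤ ‖NormedSpace.exp (r • B) - 1‖ * ‖B‖ :=
            norm_mul_le _ _
        _ ≤ r * (‖B‖ * Real.exp ‖B‖) * ‖B‖ := by
            gcongr
            exact stepA r hr.1 (hr.2.trans h1)
        _ ≤ h * (‖B‖ * Real.exp ‖B‖) * ‖B‖ := by
            have := hr.2
            gcongr)
    (convex_Icc _ _) (Set.left_mem_Icc.2 h0) (Set.right_mem_Icc.2 h0)
  have hmvt2' : ‖NormedSpace.exp (h • B) - 1 - h • B‖ ≤ h * (‖B‖ * Real.exp ‖B‖) * ‖B‖ * h := by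
    simpa [zero_smul, NormedSpace.exp_zero, sub_self, sub_zero, Real.norm_eq_abs,
      abs_of_nonneg h0] using hmvt2
  exact hmvt2'.trans_eq (by ring)


lemma trotter_net (T : ℝ → E →L[ℝ] E) (hT0 : T 0 = 1)
    (hTcont : ∀ x : E, ContinuousOn (fun t => T t x) (Set.Ici 0))
    {C : ℝ} (hC0 : 0 ≤ C) (hC : ∀ s : ℝ, 0 ≤ s → s ≤ 1 → ‖T s‖ ≤ C)
    {K : Set E} (hK : IsCompact K) {ε : ℝ} (hε : 0 < ε) :
    ∃ δ : ℝ, 0 < δ ∧ δ ≤ 1 ∧ ∀ r : ℝ, 0 ≤ r → r ≤ δ → ∀ z ∈ K, ‖T r z - z‖ ≤ ε := by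
  set ρ := ε / (2 * (C + 2)) with hρdef
  have hρpos : 0 < ρ := by positivity
  obtain ⟨net, -, hnetfin, hnetcov⟩ := hK.finite_cover_balls hρpos
  have hev : ∀ᶠ r in nhdsWithin 0 (Set.Ici 0), ∀ z ∈ net, ‖T r z - z‖ ≤ ε / 2 := by
    rw [eventually_all_finite hnetfin]
    intro z hz
    have hcont : Tendsto (fun r => T r z) (nhdsWithin 0 (Set.Ici 0)) (nhds z) := by
      have := (hTcont z) 0 Set.self_mem_Ici
      simpa [ContinuousWithinAt, hT0] using this
    have := Metric.tendsto_nhds.1 hcont (ε / 2) (half_pos hε)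
    filter_upwards [this] with r hr
    rw [dist_eq_norm] at hr
    exact hr.le
  obtain ⟨δ0, hδ0pos, hδ0⟩ := Metric.mem_nhdsWithin_iff.1 hev
  refine ⟨min (δ0 / 2) 1, by positivity, min_le_right _ _, ?_⟩
  intro r hr0 hrδ z hzK
  have hr1 : r ≤ 1 := hrδ.trans (min_le_right _ _)
  have hrball : r ∈ Metric.ball (0:ℝ) δ0 ∩ Set.Ici 0 := by
    constructor
    · rw [Metric.mem_ball, Real.dist_eq, sub_zero, abs_of_nonneg hr0]
      exact lt_of_le_of_lt (hrδ.trans (min_le_left _ _)) (by linarith)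
    · exact hr0
  have hnet := hδ0 hrball
  obtain ⟨zi, hzi, hzzi⟩ := Set.mem_iUnion₂.1 (hnetcov hzK)
  have hd : ‖z - zi‖ < ρ := by
    rw [← dist_eq_norm]
    exact Metric.mem_ball.1 hzzi
  have key : T r z - z = T r (z - zi) + (T r zi - zi) + (zi - z) := by
    rw [map_sub]; abel
  rw [key]
  have h1 : ‖T r (z - zi)‖ ≤ C * ρ := by
    refine ((T r).le_opNorm _).trans ?_
    exact mul_le_mul (hC r hr0 hr1) hd.le (norm_nonneg _) hC0
  have h2 : ‖T r zi - zi‖ ≤ ε / 2 := hnet zi hzi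
  have h3 : ‖zi - z‖ ≤ ρ := by rw [norm_sub_rev]; exact hd.le
  have hρval : (C + 2) * ρ = ε / 2 := by
    rw [hρdef]; field_simp
  calc ‖T r (z - zi) + (T r zi - zi) + (zi - z)‖
      ≤ ‖T r (z - zi)‖ + ‖T r zi - zi‖ + ‖zi - z‖ := norm_add₃_le
    _ ≤ C * ρ + ε / 2 + ρ := by gcongr
    _ ≤ ε := by nlinarith [hρpos]

lemma trotter_swap (T : ℝ → E →L[ℝ] E)
    (hTsem : ∀ s t : ℝ, 0 ≤ s → 0 ≤ t → T (s + t) = T s ∘L T t)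
    {y d dr : E} {r : ℝ} (hr : 0 ≤ r)
    (h0 : HasDerivWithinAt (fun s => T s y) d (Set.Ici 0) 0)
    (hdr : HasDerivWithinAt (fun s => T s y) dr (Set.Ici 0) r) :
    dr = T r d := by
  have hmap : Set.MapsTo (fun s : ℝ => s - r) (Set.Ici r) (Set.Ici 0) :=
    fun s hs => by simpa using sub_nonneg.2 (Set.mem_Ici.1 hs)
  have h1 : HasDerivWithinAt (fun s : ℝ => T (s - r) y) d (Set.Ici r) r := by
    have hinner : HasDerivWithinAt (fun s : ℝ => s - r) 1 (Set.Ici r) r :=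
      (hasDerivWithinAt_id r (Set.Ici r)).sub_const r
    have := HasDerivWithinAt.scomp (𝕜 := ℝ) r (by simpa using h0) hinner hmap
    simpa [Function.comp_def] using this
  have h2 : HasDerivWithinAt (fun s : ℝ => T r (T (s - r) y)) (T r d) (Set.Ici r) r :=
    (T r).hasFDerivAt.comp_hasDerivWithinAt r h1
  have hfun : ∀ s ∈ Set.Ici r, (fun s => T s y) s = (fun s : ℝ => T r (T (s - r) y)) s := by
    intro s hs
    have h4 : T s = T r ∘L T (s - r) := by
      have := hTsem r (s - r) hr (sub_nonneg.2 hs)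
      rwa [add_sub_cancel] at this
    simp only []
    rw [h4]; rfl
  have h3 : HasDerivWithinAt (fun s => T s y) (T r d) (Set.Ici r) r :=
    h2.congr hfun (hfun r Set.self_mem_Ici)
  have h5 := hdr.mono (Set.Ici_subset_Ici.2 hr)
  exact (uniqueDiffOn_Ici r r Set.self_mem_Ici).eq_deriv _ h5 h3

lemma trotter_pow_apply (U : ℝ → E →L[ℝ] E) (hU0 : U 0 = 1)
    (hUsem : ∀ s t : ℝ, 0 ≤ s → 0 ≤ t → U (s + t) = U s ∘L U t)
    {h : ℝ} (hh : 0 ≤ h) :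
    ∀ (j : ℕ) (z : E), (U h ^ j) z = U (j * h) z := by
  intro j
  induction j with
  | zero => intro z; simp [hU0]
  | succ j ih =>
    intro z
    have h1 : (U h ^ (j+1)) z = (U h ^ j) (U h z) := by
      rw [pow_succ]; rfl
    rw [h1, ih (U h z)]
    have h2 := hUsem (j * h) h (by positivity) hh
    rw [← ContinuousLinearMap.comp_apply, ← h2]
    congr 1
    push_cast
    ring

lemma trotter_telescope (P Q : E →L[ℝ] E) (x : E) {C δ : ℝ} (hC : 0 ≤ C) (hδ : 0 ≤ δ) (n : ℕ)
    (hQ : ∀ j : ℕ, j < n → ∀ z : E, ‖(Q ^ j) z‖ ≤ C * ‖z‖)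
    (hPQ : ∀ j : ℕ, j < n → ‖(P - Q) ((P ^ j) x)‖ ≤ δ) :
    ‖(P ^ n) x - (Q ^ n) x‖ ≤ n * (C * δ) := by
  have key : ∀ a m : ℕ, a + m ≤ n → ‖(P ^ a) ((P ^ m) x) - (Q ^ a) ((P ^ m) x)‖ ≤ a * (C * δ) := by
    intro a
    induction a with
    | zero => intro m _; simp
    | succ a ih =>
      intro m hm
      have e1 : (P ^ (a+1)) ((P ^ m) x) = (P ^ a) ((P ^ (m+1)) x) := by
        rw [pow_succ, pow_succ']
        rfl
      have e2 : (Q ^ (a+1)) ((P ^ m) x) = (Q ^ a) (Q ((P ^ m) x)) := by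
        rw [pow_succ]; rfl
      have e3 : (P ^ (a+1)) ((P ^ m) x) - (Q ^ (a+1)) ((P ^ m) x)
          = ((P ^ a) ((P ^ (m+1)) x) - (Q ^ a) ((P ^ (m+1)) x))
            + (Q ^ a) ((P - Q) ((P ^ m) x)) := by
        rw [e1, e2, ContinuousLinearMap.sub_apply, map_sub]
        have e4 : (P ^ (m+1)) x = P ((P ^ m) x) := by rw [pow_succ']; rfl
        rw [e4]
        abel
      rw [e3]
      have hb1 := ih (m+1) (by omega)
      have hb2 : ‖(Q ^ a) ((P - Q) ((P ^ m) x))‖ ≤ C * δ := by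
        refine (hQ a (by omega) _).trans ?_
        exact mul_le_mul_of_nonneg_left (hPQ m (by omega)) hC
      calc ‖_ + _‖ ≤ ‖(P ^ a) ((P ^ (m+1)) x) - (Q ^ a) ((P ^ (m+1)) x)‖
            + ‖(Q ^ a) ((P - Q) ((P ^ m) x))‖ := norm_add_le _ _
        _ ≤ a * (C * δ) + C * δ := add_le_add hb1 hb2
        _ = (a + 1 : ℕ) * (C * δ) := by push_cast; ring
  have := key n 0 (by omega)
  simpa using this


lemma trotter_pow_norm (T : ℝ → E →L[ℝ] E) (B : E →L[ℝ] E) (hT0 : T 0 = 1)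
    (hTsem : ∀ s t : ℝ, 0 ≤ s → 0 ≤ t → T (s + t) = T s ∘L T t)
    {M ω : ℝ} (hM1 : 1 ≤ M) (hω : 0 ≤ ω)
    (hM : ∀ s : ℝ, 0 ≤ s → ‖T s‖ ≤ M * Real.exp (ω * s)) :
    ∀ (h : ℝ), 0 ≤ h → ∀ (j : ℕ) (z : E),
      ‖((T h ∘L NormedSpace.exp (h • B)) ^ j) z‖
        ≤ M * Real.exp ((ω + M * ‖B‖) * (j * h)) * ‖z‖ := by
  have hM0 : (0:ℝ) < M := lt_of_lt_of_le one_pos hM1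
  set β := M * ‖B‖ with hβdef
  have hβ0 : 0 ≤ β := by positivity
  set N : E → ℝ := fun x => sSup ((fun s => Real.exp (-(ω * s)) * ‖T s x‖) '' Set.Ici 0) with hNdef
  have hmem : ∀ (x : E) (s : ℝ), 0 ≤ s →
      Real.exp (-(ω * s)) * ‖T s x‖ ∈ (fun s => Real.exp (-(ω * s)) * ‖T s x‖) '' Set.Ici 0 :=
    fun x s hs => ⟨s, hs, rfl⟩
  have hptw : ∀ (x : E) (s : ℝ), 0 ≤ s → Real.exp (-(ω * s)) * ‖T s x‖ ≤ M * ‖x‖ := by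
    intro x s hs
    have h1 : ‖T s x‖ ≤ M * Real.exp (ω * s) * ‖x‖ := by
      refine ((T s).le_opNorm x).trans ?_
      exact mul_le_mul_of_nonneg_right (hM s hs) (norm_nonneg x)
    have h2 : Real.exp (-(ω * s)) * Real.exp (ω * s) = 1 := by
      rw [← Real.exp_add]; simp
    calc Real.exp (-(ω * s)) * ‖T s x‖
        ≤ Real.exp (-(ω * s)) * (M * Real.exp (ω * s) * ‖x‖) := by
          exact mul_le_mul_of_nonneg_left h1 (Real.exp_nonneg _)
      _ = (Real.exp (-(ω * s)) * Real.exp (ω * s)) * (M * ‖x‖) := by ring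
      _ = M * ‖x‖ := by rw [h2, one_mul]
  have hbdd : ∀ x : E, BddAbove ((fun s => Real.exp (-(ω * s)) * ‖T s x‖) '' Set.Ici 0) := by
    intro x
    refine ⟨M * ‖x‖, ?_⟩
    rintro v ⟨s, hs, rfl⟩
    exact hptw x s hs
  have hne : ∀ x : E, ((fun s => Real.exp (-(ω * s)) * ‖T s x‖) '' Set.Ici 0).Nonempty :=
    fun x => ⟨_, hmem x 0 le_rfl⟩
  have hle : ∀ x : E, ‖x‖ ≤ N x := by
    intro x
    have := le_csSup (hbdd x) (hmem x 0 le_rfl)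
    simpa [hT0] using this
  have hub : ∀ x : E, N x ≤ M * ‖x‖ := by
    intro x
    refine csSup_le (hne x) ?_
    rintro v ⟨s, hs, rfl⟩
    exact hptw x s hs
  have hN0 : ∀ x : E, 0 ≤ N x := fun x => (norm_nonneg x).trans (hle x)
  have hNadd : ∀ x y : E, N (x + y) ≤ N x + N y := by
    intro x y
    refine csSup_le (hne _) ?_
    rintro v ⟨s, hs, rfl⟩
    have h1 : Real.exp (-(ω * s)) * ‖T s (x + y)‖
        ≤ Real.exp (-(ω * s)) * ‖T s x‖ + Real.exp (-(ω * s)) * ‖T s y‖ := by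
      rw [map_add, ← mul_add]
      exact mul_le_mul_of_nonneg_left (norm_add_le _ _) (Real.exp_nonneg _)
    exact h1.trans (add_le_add (le_csSup (hbdd x) (hmem x s hs)) (le_csSup (hbdd y) (hmem y s hs)))
  have hNsmul : ∀ (c : ℝ), 0 ≤ c → ∀ x : E, N (c • x) ≤ c * N x := by
    intro c hc x
    refine csSup_le (hne _) ?_
    rintro v ⟨s, hs, rfl⟩
    have h1 : Real.exp (-(ω * s)) * ‖T s (c • x)‖ = c * (Real.exp (-(ω * s)) * ‖T s x‖) := by
      rw [map_smul, norm_smul c (T s x), Real.norm_eq_abs, abs_of_nonneg hc]; ring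
    refine le_trans (le_of_eq h1) ?_
    exact mul_le_mul_of_nonneg_left (le_csSup (hbdd x) (hmem x s hs)) hc
  have hNT : ∀ (h : ℝ), 0 ≤ h → ∀ x : E, N (T h x) ≤ Real.exp (ω * h) * N x := by
    intro h hh x
    refine csSup_le (hne _) ?_
    rintro v ⟨s, hs, rfl⟩
    have e1 : T s (T h x) = T (s + h) x := by
      rw [hTsem s h hs hh]; rfl
    have e2 : Real.exp (-(ω * s)) = Real.exp (ω * h) * Real.exp (-(ω * (s + h))) := by
      rw [← Real.exp_add]; congr 1; ring
    have goal2 : Real.exp (-(ω * s)) * ‖T s (T h x)‖ ≤ Real.exp (ω * h) * N x := by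
      rw [e1, e2, mul_assoc]
      exact mul_le_mul_of_nonneg_left (le_csSup (hbdd x) (hmem x (s + h) (add_nonneg hs hh)))
        (Real.exp_nonneg _)
    exact goal2
  have hNB : ∀ x : E, N (B x) ≤ β * N x := by
    intro x
    calc N (B x) ≤ M * ‖B x‖ := hub _
      _ ≤ M * (‖B‖ * ‖x‖) := mul_le_mul_of_nonneg_left (B.le_opNorm x) hM0.le
      _ = β * ‖x‖ := by rw [hβdef]; ring
      _ ≤ β * N x := mul_le_mul_of_nonneg_left (hle x) hβ0
  have hNBpow : ∀ (k : ℕ) (x : E), N ((B ^ k) x) ≤ β ^ k * N x := by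
    intro k
    induction k with
    | zero => intro x; simp
    | succ k ih =>
      intro x
      have e : (B ^ (k+1)) x = (B ^ k) (B x) := by rw [pow_succ]; rfl
      rw [e]
      calc N ((B ^ k) (B x)) ≤ β ^ k * N (B x) := ih _
        _ ≤ β ^ k * (β * N x) := mul_le_mul_of_nonneg_left (hNB x) (by positivity)
        _ = β ^ (k+1) * N x := by ring
  have hNlip : ∀ x y : E, N x ≤ N y + M * ‖x - y‖ := by
    intro x y
    calc N x = N (y + (x - y)) := by rw [add_sub_cancel]
      _ ≤ N y + N (x - y) := hNadd _ _
      _ ≤ N y + M * ‖x - y‖ := add_le_add_right (hub _) _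
  have hNexp : ∀ (h : ℝ), 0 ≤ h → ∀ x : E,
      N (NormedSpace.exp (h • B) x) ≤ Real.exp (β * h) * N x := by
    intro h hh x
    have hsumop : HasSum (fun k : ℕ => ((k.factorial:ℝ)⁻¹ • (h • B) ^ k))
        (NormedSpace.exp (h • B)) := by
      rw [NormedSpace.exp_eq_tsum ℝ]
      exact (NormedSpace.expSeries_summable' (𝕂 := ℝ) (h • B)).hasSum
    have hsum : HasSum (fun k : ℕ => ((k.factorial:ℝ)⁻¹ • (h • B) ^ k) x)
        (NormedSpace.exp (h • B) x) := hsumop.mapL (ContinuousLinearMap.apply ℝ E x)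
    have hpart := hsum.tendsto_sum_nat
    have hterm : ∀ k : ℕ, N (((k.factorial:ℝ)⁻¹ • (h • B) ^ k) x)
        ≤ ((k.factorial:ℝ)⁻¹ * (β * h) ^ k) * N x := by
      intro k
      have e1 : (((k.factorial:ℝ)⁻¹ • (h • B) ^ k)) x
          = ((k.factorial:ℝ)⁻¹ * h ^ k) • ((B ^ k) x) := by
        rw [smul_pow, smul_smul, ContinuousLinearMap.smul_apply]
      rw [e1]
      have hc : (0:ℝ) ≤ (k.factorial:ℝ)⁻¹ * h ^ k := by positivity
      calc N (((k.factorial:ℝ)⁻¹ * h ^ k) • ((B ^ k) x))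
          ≤ ((k.factorial:ℝ)⁻¹ * h ^ k) * N ((B ^ k) x) := hNsmul _ hc _
        _ ≤ ((k.factorial:ℝ)⁻¹ * h ^ k) * (β ^ k * N x) :=
            mul_le_mul_of_nonneg_left (hNBpow k x) hc
        _ = ((k.factorial:ℝ)⁻¹ * (β * h) ^ k) * N x := by rw [mul_pow]; ring
    have hpartial : ∀ m : ℕ,
        N (∑ k ∈ Finset.range m, ((k.factorial:ℝ)⁻¹ • (h • B) ^ k) x)
          ≤ Real.exp (β * h) * N x := by
      intro m
      have hsub : N (∑ k ∈ Finset.range m, ((k.factorial:ℝ)⁻¹ • (h • B) ^ k) x)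
          ≤ ∑ k ∈ Finset.range m, ((k.factorial:ℝ)⁻¹ * (β * h) ^ k) * N x := by
        induction m with
        | zero =>
          simp only [Finset.range_zero, Finset.sum_empty]
          have := hub (0 : E)
          simpa using this
        | succ m ihm =>
          rw [Finset.sum_range_succ, Finset.sum_range_succ]
          exact (hNadd _ _).trans (add_le_add ihm (hterm m))
      refine hsub.trans ?_
      rw [← Finset.sum_mul]
      refine mul_le_mul_of_nonneg_right ?_ (hN0 x)
      have hsumreal := NormedSpace.expSeries_summable' (𝕂 := ℝ) (β * h)
      have hsumreal' : Summable (fun k : ℕ => (k.factorial:ℝ)⁻¹ * (β * h) ^ k) := by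
        simpa [smul_eq_mul] using hsumreal
      refine (Summable.sum_le_tsum (Finset.range m) (fun k _ => by positivity) hsumreal').trans ?_
      rw [Real.exp_eq_exp_ℝ, NormedSpace.exp_eq_tsum ℝ]
      simp [smul_eq_mul]
    -- pass to the limit
    have hlim : Tendsto (fun m => Real.exp (β * h) * N x
        + M * ‖NormedSpace.exp (h • B) x - ∑ k ∈ Finset.range m, ((k.factorial:ℝ)⁻¹ • (h • B) ^ k) x‖)
        atTop (nhds (Real.exp (β * h) * N x + M * 0)) := by
      refine tendsto_const_nhds.add (tendsto_const_nhds.mul ?_)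
      have := (tendsto_const_nhds (x := NormedSpace.exp (h • B) x) (f := atTop (α := ℕ))).sub hpart
      simpa using this.norm
    have hbound : ∀ m : ℕ, N (NormedSpace.exp (h • B) x)
        ≤ Real.exp (β * h) * N x
          + M * ‖NormedSpace.exp (h • B) x - ∑ k ∈ Finset.range m, ((k.factorial:ℝ)⁻¹ • (h • B) ^ k) x‖ := by
      intro m
      refine (hNlip _ (∑ k ∈ Finset.range m, ((k.factorial:ℝ)⁻¹ • (h • B) ^ k) x)).trans ?_
      exact add_le_add_left (hpartial m) _
    have := ge_of_tendsto' hlim hbound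
    simpa using this
  -- powers of V
  intro h hh j z
  set V := T h ∘L NormedSpace.exp (h • B) with hVdef
  have hNV : ∀ x : E, N (V x) ≤ Real.exp ((ω + β) * h) * N x := by
    intro x
    calc N (V x) = N (T h (NormedSpace.exp (h • B) x)) := rfl
      _ ≤ Real.exp (ω * h) * N (NormedSpace.exp (h • B) x) := hNT h hh _
      _ ≤ Real.exp (ω * h) * (Real.exp (β * h) * N x) :=
          mul_le_mul_of_nonneg_left (hNexp h hh x) (Real.exp_nonneg _)
      _ = Real.exp ((ω + β) * h) * N x := by rw [← mul_assoc, ← Real.exp_add]; congr 2; ring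
  have hNVpow : ∀ (j : ℕ) (x : E), N ((V ^ j) x) ≤ Real.exp ((ω + β) * (j * h)) * N x := by
    intro j
    induction j with
    | zero => intro x; simp
    | succ j ih =>
      intro x
      have e : (V ^ (j+1)) x = (V ^ j) (V x) := by rw [pow_succ]; rfl
      rw [e]
      calc N ((V ^ j) (V x)) ≤ Real.exp ((ω + β) * (j * h)) * N (V x) := ih _
        _ ≤ Real.exp ((ω + β) * (j * h)) * (Real.exp ((ω + β) * h) * N x) :=
            mul_le_mul_of_nonneg_left (hNV x) (Real.exp_nonneg _)
        _ = Real.exp ((ω + β) * ((j + 1 : ℕ) * h)) * N x := by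
            rw [← mul_assoc, ← Real.exp_add]; congr 2; push_cast; ring
  calc ‖(V ^ j) z‖ ≤ N ((V ^ j) z) := hle _
    _ ≤ Real.exp ((ω + β) * (j * h)) * N z := hNVpow j z
    _ ≤ Real.exp ((ω + β) * (j * h)) * (M * ‖z‖) :=
        mul_le_mul_of_nonneg_left (hub z) (Real.exp_nonneg _)
    _ = M * Real.exp ((ω + β) * (j * h)) * ‖z‖ := by ring


end TrotterAux

/-- Trotter product formula: if `(T_t)_{t ≥ 0}` is a strongly continuous semigroup on a Banach
space `E` with generator `A` (with dense domain `dom`), `B` is a bounded operator, and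
`(U_t)_{t ≥ 0}` is the strongly continuous semigroup generated by `A + B`, then
`U_t x = lim_n (T_{t/n} e^{tB/n})^n x` for all `x ∈ E`. -/
theorem stmt_11 {E : Type*} [NormedAddCommGroup E] [NormedSpace ℝ E] [CompleteSpace E]
    (T U : ℝ → E →L[ℝ] E) (B : E →L[ℝ] E)
    (dom : Submodule ℝ E) (hdom : Dense (dom : Set E))
    (A : E → E)
    (hT0 : T 0 = 1) (hU0 : U 0 = 1)
    (hTsem : ∀ s t : ℝ, 0 ≤ s → 0 ≤ t → T (s + t) = T s ∘L T t)
    (hUsem : ∀ s t : ℝ, 0 ≤ s → 0 ≤ t → U (s + t) = U s ∘L U t)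
    (hTcont : ∀ x : E, ContinuousOn (fun t => T t x) (Set.Ici 0))
    (hUcont : ∀ x : E, ContinuousOn (fun t => U t x) (Set.Ici 0))
    -- `A` is the generator of `T` on the domain `dom`
    (hTgen : ∀ x ∈ dom, ∀ t : ℝ, 0 ≤ t → T t x ∈ dom ∧
      HasDerivWithinAt (fun s => T s x) (A (T t x)) (Set.Ici 0) t)
    -- `A + B` is the generator of `U` on the domain `dom`
    (hUgen : ∀ x ∈ dom, ∀ t : ℝ, 0 ≤ t → U t x ∈ dom ∧
      HasDerivWithinAt (fun s => U s x) (A (U t x) + B (U t x)) (Set.Ici 0) t) :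
    ∀ x : E, ∀ t : ℝ, 0 ≤ t →
      Tendsto (fun n : ℕ => ((T (t / n) ∘L NormedSpace.exp ((t / n) • B)) ^ n) x)
        atTop (nhds (U t x)) := by
  intro x t ht
  rcases ht.eq_or_lt with heq | htpos
  · -- t = 0
    have hconst : ∀ n : ℕ, ((T (t / n) ∘L NormedSpace.exp ((t / n) • B)) ^ n) x = U t x := by
      intro n
      rw [← heq, zero_div, hT0, zero_smul, NormedSpace.exp_zero, hU0]
      have e : (1 : E →L[ℝ] E).comp (1 : E →L[ℝ] E) = (1 : E →L[ℝ] E) := by ext z; rfl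
      rw [e, one_pow]
    exact (tendsto_congr hconst).2 tendsto_const_nhds
  -- main case 0 < t
  obtain ⟨M₁, hM₁1, hM₁⟩ := trotter_bdd T hTcont 1
  have hM₁0 : (0:ℝ) < M₁ := lt_of_lt_of_le one_pos hM₁1
  set ω := Real.log M₁ with hωdef
  have hω : 0 ≤ ω := Real.log_nonneg hM₁1
  have hTg : ∀ s : ℝ, 0 ≤ s → ‖T s‖ ≤ M₁ * Real.exp (ω * s) := trotter_growth T hTsem hM₁1 hM₁
  obtain ⟨CU, hCU1, hCU⟩ := trotter_bdd U hUcont t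
  have hCU0 : (0:ℝ) < CU := lt_of_lt_of_le one_pos hCU1
  set β := M₁ * ‖B‖ with hβdef
  have hβ0 : 0 ≤ β := by positivity
  set CV := M₁ * Real.exp ((ω + β) * t) with hCVdef
  have hCV1 : 1 ≤ CV := by
    have h1 : (1:ℝ) ≤ Real.exp ((ω + β) * t) := Real.one_le_exp (by positivity)
    nlinarith
  have hCV0 : (0:ℝ) < CV := lt_of_lt_of_le one_pos hCV1
  have hVpow : ∀ h : ℝ, 0 ≤ h → ∀ j : ℕ, (j : ℝ) * h ≤ t → ∀ z : E,
      ‖((T h ∘L NormedSpace.exp (h • B)) ^ j) z‖ ≤ CV * ‖z‖ := by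
    intro h hh j hjt z
    refine (trotter_pow_norm T B hT0 hTsem hM₁1 hω hTg h hh j z).trans ?_
    rw [hCVdef]
    have h1 : Real.exp ((ω + β) * ((j:ℝ) * h)) ≤ Real.exp ((ω + β) * t) :=
      Real.exp_le_exp.2 (mul_le_mul_of_nonneg_left hjt (by positivity))
    calc M₁ * Real.exp ((ω + β) * ((j:ℝ) * h)) * ‖z‖
        ≤ M₁ * Real.exp ((ω + β) * t) * ‖z‖ := by
          exact mul_le_mul_of_nonneg_right (mul_le_mul_of_nonneg_left h1 hM₁0.le) (norm_nonneg z)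
      _ = M₁ * Real.exp ((ω + β) * t) * ‖z‖ := rfl
  -- Key claim for x' in the domain
  have key : ∀ x' ∈ dom,
      Tendsto (fun n : ℕ => ((T (t / n) ∘L NormedSpace.exp ((t / n) • B)) ^ n) x')
        atTop (nhds (U t x')) := by
    intro x' hx'
    rw [NormedAddCommGroup.tendsto_atTop]
    intro ε hε
    set w := A x' + B x' with hwdef
    have hUmem : ∀ s : ℝ, 0 ≤ s → U s x' ∈ dom := fun s hs => (hUgen x' hx' s hs).1
    have hUder : ∀ s : ℝ, 0 ≤ s →
        HasDerivWithinAt (fun r => U r x') (A (U s x') + B (U s x')) (Set.Ici 0) s :=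
      fun s hs => (hUgen x' hx' s hs).2
    have hU0x : U 0 x' = x' := by rw [hU0]; rfl
    have hU0der : HasDerivWithinAt (fun r => U r x') w (Set.Ici 0) 0 := by
      have h1 := hUder 0 le_rfl
      rwa [hU0x] at h1
    have hswapU : ∀ s : ℝ, 0 ≤ s → A (U s x') + B (U s x') = U s w :=
      fun s hs => trotter_swap U hUsem hs hU0der (hUder s hs)
    have hAval : ∀ s : ℝ, 0 ≤ s → A (U s x') = U s w - B (U s x') :=
      fun s hs => eq_sub_of_add_eq (hswapU s hs)
    -- compact sets
    have haCont : ContinuousOn (fun s : ℝ => U s w - B (U s x')) (Set.Icc 0 t) := by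
      refine ContinuousOn.sub ((hUcont w).mono Set.Icc_subset_Ici_self) ?_
      exact B.continuous.comp_continuousOn ((hUcont x').mono Set.Icc_subset_Ici_self)
    have hbCont : ContinuousOn (fun s : ℝ => B (U s x')) (Set.Icc 0 t) :=
      B.continuous.comp_continuousOn ((hUcont x').mono Set.Icc_subset_Ici_self)
    have hKa : IsCompact ((fun s : ℝ => U s w - B (U s x')) '' Set.Icc 0 t) :=
      isCompact_Icc.image_of_continuousOn haCont
    have hKb : IsCompact ((fun s : ℝ => B (U s x')) '' Set.Icc 0 t) :=
      isCompact_Icc.image_of_continuousOn hbCont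
    set ε₁ := ε / (CV * (t + 1)) with hε₁def
    have hε₁pos : 0 < ε₁ := by positivity
    -- (a) piece
    have hslope := (hasDerivWithinAt_iff_tendsto_slope.1 hU0der)
    have hsl2 := Metric.tendsto_nhds.1 hslope (ε₁ / 4 / CU) (by positivity)
    obtain ⟨δa, hδapos, hδa⟩ := Metric.mem_nhdsWithin_iff.1 hsl2
    have hA : ∀ h : ℝ, 0 < h → h ≤ δa / 2 → ‖U h x' - x' - h • w‖ ≤ (ε₁ / 4 / CU) * h := by
      intro h hhpos hhle
      have hmem : h ∈ Metric.ball (0:ℝ) δa ∩ (Set.Ici 0 \ {0}) := by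
        constructor
        · rw [Metric.mem_ball, Real.dist_eq, sub_zero, abs_of_nonneg hhpos.le]
          linarith
        · exact ⟨hhpos.le, by simp [ne_of_gt hhpos]⟩
      have h1 := hδa hmem
      rw [Set.mem_setOf_eq, dist_eq_norm] at h1
      have h2 : slope (fun r => U r x') 0 h = h⁻¹ • (U h x' - x') := by
        rw [slope_def_module]; rw [hU0x]; rw [sub_zero]
      rw [h2] at h1
      have h3 : U h x' - x' - h • w = h • (h⁻¹ • (U h x' - x') - w) := by
        rw [smul_sub, smul_smul, mul_inv_cancel₀ (ne_of_gt hhpos), one_smul]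
      rw [h3, norm_smul h _, Real.norm_eq_abs, abs_of_nonneg hhpos.le]
      calc h * ‖h⁻¹ • (U h x' - x') - w‖ ≤ h * (ε₁ / 4 / CU) :=
            mul_le_mul_of_nonneg_left h1.le hhpos.le
        _ = (ε₁ / 4 / CU) * h := mul_comm _ _
    -- (b) piece : net on Ka
    obtain ⟨δb, hδbpos, hδb1, hδb⟩ := trotter_net T hT0 hTcont (by linarith : (0:ℝ) ≤ M₁) hM₁
      hKa (show (0:ℝ) < ε₁ / 4 by positivity)
    -- (d) piece : net on Kb
    obtain ⟨δd, hδdpos, hδd1, hδd⟩ := trotter_net T hT0 hTcont (by linarith : (0:ℝ) ≤ M₁) hM₁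
      hKb (show (0:ℝ) < ε₁ / 4 by positivity)
    -- (c) piece constant
    set Cc := M₁ * (‖B‖ ^ 2 * Real.exp ‖B‖) * (CU * ‖x'‖) with hCcdef
    have hCc0 : 0 ≤ Cc := by positivity
    set δc := min 1 (ε₁ / 4 / (Cc + 1)) with hδcdef
    have hδcpos : 0 < δc := by positivity
    set δ := min (min (δa / 2) δb) (min δc δd) with hδdef
    have hδpos : 0 < δ := by positivity
    -- CORE estimate
    have core : ∀ h : ℝ, 0 < h → h ≤ δ → ∀ s : ℝ, 0 ≤ s → s ≤ t →
        ‖U h (U s x') - (T h ∘L NormedSpace.exp (h • B)) (U s x')‖ ≤ ε₁ * h := by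
      intro h hhpos hhδ s hs0 hst
      have hhδa : h ≤ δa / 2 := hhδ.trans ((min_le_left _ _).trans (min_le_left _ _))
      have hhδb : h ≤ δb := hhδ.trans ((min_le_left _ _).trans (min_le_right _ _))
      have hhδc : h ≤ δc := hhδ.trans ((min_le_right _ _).trans (min_le_left _ _))
      have hhδd : h ≤ δd := hhδ.trans ((min_le_right _ _).trans (min_le_right _ _))
      have hh1 : h ≤ 1 := hhδc.trans (min_le_left _ _)
      set y := U s x' with hydef
      have hymem : y ∈ dom := hUmem s hs0
      have hynorm : ‖y‖ ≤ CU * ‖x'‖ := by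
        refine ((U s).le_opNorm x').trans ?_
        exact mul_le_mul_of_nonneg_right (hCU s hs0 hst) (norm_nonneg _)
      -- term (a)
      have terma : ‖U h y - y - h • (U s w)‖ ≤ (ε₁ / 4) * h := by
        have e1 : U h y = U s (U h x') := by
          rw [hydef]
          rw [← ContinuousLinearMap.comp_apply, ← hUsem h s hhpos.le hs0]
          rw [← ContinuousLinearMap.comp_apply, ← hUsem s h hs0 hhpos.le]
          rw [add_comm]
        have e2 : U h y - y - h • (U s w) = U s (U h x' - x' - h • w) := by
          rw [map_sub, map_sub, map_smul, ← e1, hydef]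
        rw [e2]
        refine ((U s).le_opNorm _).trans ?_
        have := mul_le_mul (hCU s hs0 hst) (hA h hhpos hhδa) (norm_nonneg _) hCU0.le
        refine this.trans ?_
        rw [mul_comm (ε₁ / 4 / CU) h]
        rw [← mul_assoc]
        rw [mul_comm CU h]
        rw [mul_assoc]
        rw [mul_div_cancel₀ _ (ne_of_gt hCU0)]
        rw [mul_comm h (ε₁/4)]
      -- term (b)
      have termb : ‖T h y - y - h • (U s w - B y)‖ ≤ (ε₁ / 4) * h := by
        have hay : A y = U s w - B y := by rw [hydef]; exact hAval s hs0
        have hT0y : T 0 y = y := by rw [hT0]; rfl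
        have hTyder0 : HasDerivWithinAt (fun r => T r y) (A y) (Set.Ici 0) 0 := by
          have h1 := (hTgen y hymem 0 le_rfl).2
          rwa [hT0y] at h1
        have hder : ∀ r ∈ Set.Icc (0:ℝ) h,
            HasDerivWithinAt (fun r => T r y - r • (U s w - B y)) (T r (U s w - B y) - (U s w - B y))
              (Set.Icc (0:ℝ) h) r := by
          intro r hr
          have h1 := (hTgen y hymem r hr.1).2
          have h2 : A (T r y) = T r (A y) := trotter_swap T hTsem hr.1 hTyder0 h1
          have h3 : HasDerivWithinAt (fun r => T r y) (T r (U s w - B y)) (Set.Icc (0:ℝ) h) r := by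
            have := h1.mono (Set.Icc_subset_Ici_self : Set.Icc (0:ℝ) h ⊆ Set.Ici 0)
            rwa [h2, hay] at this
          have h4 : HasDerivWithinAt (fun r : ℝ => r • (U s w - B y)) (U s w - B y)
              (Set.Icc (0:ℝ) h) r := by
            have := (hasDerivWithinAt_id r (Set.Icc (0:ℝ) h)).smul_const (U s w - B y)
            simpa using this
          exact h3.sub h4
        have hbound : ∀ r ∈ Set.Icc (0:ℝ) h, ‖T r (U s w - B y) - (U s w - B y)‖ ≤ ε₁ / 4 := by
          intro r hr
          refine hδb r hr.1 (hr.2.trans hhδb) _ ?_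
          exact ⟨s, ⟨hs0, hst⟩, rfl⟩
        have hmvt := Convex.norm_image_sub_le_of_norm_hasDerivWithin_le hder hbound
          (convex_Icc _ _) (Set.left_mem_Icc.2 hhpos.le) (Set.right_mem_Icc.2 hhpos.le)
        have e0 : T 0 y - (0:ℝ) • (U s w - B y) = y := by rw [hT0y, zero_smul, sub_zero]
        calc ‖T h y - y - h • (U s w - B y)‖
            = ‖(T h y - h • (U s w - B y)) - (T 0 y - (0:ℝ) • (U s w - B y))‖ := by
              rw [e0]; congr 1; abel
          _ ≤ (ε₁ / 4) * ‖h - 0‖ := hmvt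
          _ = (ε₁ / 4) * h := by rw [sub_zero, Real.norm_eq_abs, abs_of_nonneg hhpos.le]
      -- term (c)
      have termc : ‖T h (NormedSpace.exp (h • B) y - y - h • B y)‖ ≤ (ε₁ / 4) * h := by
        have e1 : NormedSpace.exp (h • B) y - y - h • B y
            = (NormedSpace.exp (h • B) - 1 - h • B) y := by
          simp [ContinuousLinearMap.sub_apply, ContinuousLinearMap.smul_apply]
        rw [e1]
        have h1 : ‖T h‖ ≤ M₁ := hM₁ h hhpos.le hh1
        have h2 := trotter_exp_remainder B hhpos.le hh1
        calc ‖T h ((NormedSpace.exp (h • B) - 1 - h • B) y)‖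
            ≤ ‖T h‖ * ‖(NormedSpace.exp (h • B) - 1 - h • B) y‖ := (T h).le_opNorm _
          _ ≤ M₁ * (‖NormedSpace.exp (h • B) - 1 - h • B‖ * ‖y‖) := by
              refine mul_le_mul h1 ?_ (norm_nonneg _) hM₁0.le
              exact (NormedSpace.exp (h • B) - 1 - h • B).le_opNorm _
          _ ≤ M₁ * ((h ^ 2 * (‖B‖ ^ 2 * Real.exp ‖B‖)) * (CU * ‖x'‖)) := by
              refine mul_le_mul_of_nonneg_left ?_ hM₁0.le
              exact mul_le_mul h2 hynorm (norm_nonneg _) (by positivity)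
          _ = (h * Cc) * h := by rw [hCcdef]; ring
          _ ≤ (ε₁ / 4) * h := by
              refine mul_le_mul_of_nonneg_right ?_ hhpos.le
              have : h ≤ ε₁ / 4 / (Cc + 1) := hhδc.trans (min_le_right _ _)
              calc h * Cc ≤ (ε₁ / 4 / (Cc + 1)) * (Cc + 1) := by nlinarith
                _ = ε₁ / 4 := by field_simp
      -- term (d)
      have termd : ‖h • (T h (B y) - B y)‖ ≤ (ε₁ / 4) * h := by
        rw [norm_smul h _, Real.norm_eq_abs, abs_of_nonneg hhpos.le]
        have h1 : ‖T h (B y) - B y‖ ≤ ε₁ / 4 := by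
          refine hδd h hhpos.le hhδd _ ?_
          exact ⟨s, ⟨hs0, hst⟩, rfl⟩
        calc h * ‖T h (B y) - B y‖ ≤ h * (ε₁ / 4) := mul_le_mul_of_nonneg_left h1 hhpos.le
          _ = (ε₁ / 4) * h := by ring
      -- identity
      have hiden : U h y - (T h ∘L NormedSpace.exp (h • B)) y
          = (U h y - y - h • (U s w)) - (T h y - y - h • (U s w - B y))
            - (T h (NormedSpace.exp (h • B) y - y - h • B y)) - h • (T h (B y) - B y) := by
        rw [ContinuousLinearMap.comp_apply, map_sub, map_sub, map_smul]
        module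
      calc ‖U h (U s x') - (T h ∘L NormedSpace.exp (h • B)) (U s x')‖
          = ‖(U h y - y - h • (U s w)) - (T h y - y - h • (U s w - B y))
            - (T h (NormedSpace.exp (h • B) y - y - h • B y)) - h • (T h (B y) - B y)‖ := by
            rw [← hiden]
        _ ≤ ‖(U h y - y - h • (U s w)) - (T h y - y - h • (U s w - B y))
            - (T h (NormedSpace.exp (h • B) y - y - h • B y))‖ + ‖h • (T h (B y) - B y)‖ :=
            norm_sub_le _ _
        _ ≤ ‖(U h y - y - h • (U s w)) - (T h y - y - h • (U s w - B y))‖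
            + ‖T h (NormedSpace.exp (h • B) y - y - h • B y)‖ + ‖h • (T h (B y) - B y)‖ := by
            gcongr; exact norm_sub_le _ _
        _ ≤ ‖U h y - y - h • (U s w)‖ + ‖T h y - y - h • (U s w - B y)‖
            + ‖T h (NormedSpace.exp (h • B) y - y - h • B y)‖ + ‖h • (T h (B y) - B y)‖ := by
            gcongr; exact norm_sub_le _ _
        _ ≤ (ε₁ / 4) * h + (ε₁ / 4) * h + (ε₁ / 4) * h + (ε₁ / 4) * h := by
            gcongr <;> first
              | exact terma
              | exact termb
              | exact termc
              | exact termd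
        _ = ε₁ * h := by ring
    -- choose N
    obtain ⟨N₀, hN₀⟩ := exists_nat_gt (t / δ)
    set N := N₀ + 1 with hNdef
    refine ⟨N, fun n hn => ?_⟩
    have hn1 : 1 ≤ n := le_trans (by omega) hn
    have hnpos : (0:ℝ) < n := by exact_mod_cast hn1
    set h := t / n with hhdef
    have hhpos : 0 < h := by positivity
    have hnh : (n:ℝ) * h = t := by
      rw [hhdef, mul_div_cancel₀ _ (ne_of_gt hnpos)]
    have hhδ : h ≤ δ := by
      rw [hhdef, div_le_iff₀ hnpos]
      have h1 : t / δ < N₀ + 1 := hN₀.trans (by norm_num)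
      have h2 : (N:ℝ) ≤ n := by exact_mod_cast hn
      have h3 : t / δ < n := lt_of_lt_of_le (by exact_mod_cast h1) h2
      rw [div_lt_iff₀ hδpos] at h3
      nlinarith
    -- telescoping
    have htel := trotter_telescope (U h) (T h ∘L NormedSpace.exp (h • B)) x'
      (hCV0.le) (by positivity : (0:ℝ) ≤ ε₁ * h) n
      (fun j hj z => hVpow h hhpos.le j (by
        have : (j:ℝ) ≤ n := by exact_mod_cast hj.le
        nlinarith) z)
      (fun j hj => by
        have hpa := trotter_pow_apply U hU0 hUsem hhpos.le j x'
        rw [ContinuousLinearMap.sub_apply, hpa]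
        have hs0 : (0:ℝ) ≤ (j:ℝ) * h := by positivity
        have hst : (j:ℝ) * h ≤ t := by
          have h1 : (j:ℝ) ≤ n := by exact_mod_cast hj.le
          nlinarith
        exact core h hhpos hhδ ((j:ℝ) * h) hs0 hst)
    have hUn : ((U h) ^ n) x' = U t x' := by
      rw [trotter_pow_apply U hU0 hUsem hhpos.le n x', hnh]
    rw [hUn] at htel
    have hfinal : ‖((T h ∘L NormedSpace.exp (h • B)) ^ n) x' - U t x'‖
        ≤ (n:ℝ) * (CV * (ε₁ * h)) := by
      rw [norm_sub_rev]
      exact htel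
    have hle2 : (n:ℝ) * (CV * (ε₁ * h)) = CV * ε₁ * t := by rw [← hnh]; ring
    have hval : CV * ε₁ * t = ε * (t / (t + 1)) := by
      rw [hε₁def]
      have h3 : t + 1 ≠ 0 := by positivity
      field_simp
    refine lt_of_le_of_lt ?_ (show ε * (t / (t+1)) < ε by
      rw [mul_comm]
      refine mul_lt_of_lt_one_left hε ?_
      rw [div_lt_one (by linarith)]
      linarith)
    rw [← hval, ← hle2]
    exact hfinal
  -- density argument
  rw [NormedAddCommGroup.tendsto_atTop]
  intro ε hε
  have hd3 : 0 < ε / (3 * (CV + CU)) := by positivity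
  obtain ⟨x', hx'mem, hx'dist⟩ := hdom.exists_dist_lt x hd3
  have hx'norm : ‖x - x'‖ < ε / (3 * (CV + CU)) := by
    rw [← dist_eq_norm]; exact hx'dist
  obtain ⟨N, hN⟩ := NormedAddCommGroup.tendsto_atTop.1 (key x' hx'mem) (ε / 3) (by positivity)
  refine ⟨max N 1, fun n hn => ?_⟩
  have hnN : N ≤ n := le_trans (le_max_left _ _) hn
  have hn1 : 1 ≤ n := le_trans (le_max_right _ _) hn
  have hnpos : (0:ℝ) < n := by exact_mod_cast hn1
  set h := t / n with hhdef
  have hh0 : 0 ≤ h := by positivity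
  have hnh : (n:ℝ) * h = t := mul_div_cancel₀ _ (ne_of_gt hnpos)
  set V := T h ∘L NormedSpace.exp (h • B) with hVdef
  have hsplit : (V ^ n) x - U t x
      = (V ^ n) (x - x') + ((V ^ n) x' - U t x') + (U t x' - U t x) := by
    rw [map_sub]; abel
  have h1 : ‖(V ^ n) (x - x')‖ ≤ CV * ‖x - x'‖ := hVpow h hh0 n (by rw [hnh]) _
  have h2 : ‖(V ^ n) x' - U t x'‖ < ε / 3 := hN n hnN
  have h3 : ‖U t x' - U t x‖ ≤ CU * ‖x - x'‖ := by
    have : U t x' - U t x = U t (x' - x) := by rw [map_sub]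
    rw [this]
    refine ((U t).le_opNorm _).trans ?_
    rw [norm_sub_rev]
    exact mul_le_mul_of_nonneg_right (hCU t ht le_rfl) (norm_nonneg _)
  have h5 : (CV + CU) * ‖x - x'‖ ≤ ε / 3 := by
    have h6 : (CV + CU) * ‖x - x'‖ ≤ (CV + CU) * (ε / (3 * (CV + CU))) :=
      mul_le_mul_of_nonneg_left hx'norm.le (by positivity)
    have heq : (CV + CU) * (ε / (3 * (CV + CU))) = ε / 3 := by
      field_simp
    linarith
  have hsum : ‖(V ^ n) x - U t x‖
      ≤ ‖(V ^ n) (x - x')‖ + ‖(V ^ n) x' - U t x'‖ + ‖U t x' - U t x‖ := by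
    rw [hsplit]; exact norm_add₃_le
  linarith
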